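/- Let P ⊆ ℝ^d be a polytope with nonempty interior. Then every facet of the difference polytope P′ = P − P = {x − y : x, y ∈ P} is of the form F₁ − F₂, where F₁ and F₂ are strictly antipodal faces of P whose Minkowski sum F₁ + F₂ has affine dimension d − 1. -/

import Mathlib

open Set Metric Pointwise

noncomputable section

variable {d : ℕ}

abbrev Euc (d : ℕ) := EuclideanSpace ℝ (Fin d)

/-- A polytope is the convex hull of finitely many points. -/
def IsPolytope (P : Set (Euc d)) : Prop :=
  ∃ V : Finset (Euc d), P = convexHull ℝ (V : Set (Euc d))

/-- A convex body is a compact convex set with nonempty interior. -/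
def IsConvexBody (K : Set (Euc d)) : Prop :=
  Convex ℝ K ∧ IsCompact K ∧ (interior K).Nonempty

/-- Support function. -/
def suppFn (K : Set (Euc d)) (u : Euc d) : ℝ :=
  sSup {r | ∃ x ∈ K, r = inner ℝ u x}

/-- Width in direction `u`. -/
def dirWidth (K : Set (Euc d)) (u : Euc d) : ℝ :=
  suppFn K u + suppFn K (-u)

/-- Minimum width. -/
def minWidth (K : Set (Euc d)) : ℝ :=
  sInf {r | ∃ u : Euc d, ‖u‖ = 1 ∧ r = dirWidth K u}

/-- A convex body is reduced if every convex body properly contained in it has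
strictly smaller minimum width. -/
def IsReducedBody (K : Set (Euc d)) : Prop :=
  IsConvexBody K ∧ ∀ K' : Set (Euc d), IsConvexBody K' → K' ⊂ K → minWidth K' < minWidth K

/-- The intersection of `P` with the supporting hyperplane with outer normal `u`. -/
def suppSet (P : Set (Euc d)) (u : Euc d) : Set (Euc d) :=
  P ∩ {x | (inner ℝ u x : ℝ) = suppFn P u}

/-- A (proper, nonempty) face of a polytope. -/
def IsFaceOf (P F : Set (Euc d)) : Prop :=
  ∃ u : Euc d, ‖u‖ = 1 ∧ F = suppSet P u

/-- Affine dimension of a set. -/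
def affDim (A : Set (Euc d)) : ℕ :=
  Module.finrank ℝ (affineSpan ℝ A).direction

def IsVertexOf (P : Set (Euc d)) (v : Euc d) : Prop :=
  IsFaceOf P {v}

def IsEdgeOf (P F : Set (Euc d)) : Prop :=
  IsFaceOf P F ∧ affDim F = 1

def IsFacetOf (P F : Set (Euc d)) : Prop :=
  IsFaceOf P F ∧ affDim F = d - 1

/-- Distinct faces `F₁`, `F₂` are strictly antipodal if there is a unit direction `u`
with `H(P,u) ∩ P = F₁` and `H(P,-u) ∩ P = F₂`. -/
def StrictlyAntipodal (P F₁ F₂ : Set (Euc d)) : Prop :=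
  F₁ ≠ F₂ ∧ ∃ u : Euc d, ‖u‖ = 1 ∧ suppSet P u = F₁ ∧ suppSet P (-u) = F₂

/-- Distance between the affine hulls of `A` and `B`. -/
def affDist (A B : Set (Euc d)) : ℝ :=
  sInf {r | ∃ x ∈ (affineSpan ℝ A : Set (Euc d)), ∃ y ∈ (affineSpan ℝ B : Set (Euc d)),
    r = dist x y}


section Helpers

variable {d : ℕ}

lemma suppFn_set_eq (K : Set (Euc d)) (u : Euc d) :
    {r | ∃ x ∈ K, r = inner ℝ u x} = (fun x => (inner ℝ u x : ℝ)) '' K := by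
  ext r
  simp [eq_comm]

lemma continuous_inner_left (u : Euc d) : Continuous (fun x : Euc d => (inner ℝ u x : ℝ)) :=
  continuous_const.inner continuous_id

lemma bddAbove_suppFn_set {K : Set (Euc d)} (hK : IsCompact K) (u : Euc d) :
    BddAbove {r : ℝ | ∃ x ∈ K, r = inner ℝ u x} := by
  rw [suppFn_set_eq]
  exact (hK.image (continuous_inner_left u)).bddAbove

lemma le_suppFn {K : Set (Euc d)} (hK : IsCompact K) (u : Euc d) {x : Euc d} (hx : x ∈ K) :
    (inner ℝ u x : ℝ) ≤ suppFn K u :=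
  le_csSup (bddAbove_suppFn_set hK u) ⟨x, hx, rfl⟩

lemma exists_suppFn_eq {K : Set (Euc d)} (hK : IsCompact K) (hne : K.Nonempty) (u : Euc d) :
    ∃ x ∈ K, (inner ℝ u x : ℝ) = suppFn K u := by
  have h1 : suppFn K u ∈ (fun x => (inner ℝ u x : ℝ)) '' K := by
    have := (hK.image (continuous_inner_left u)).sSup_mem (hne.image _)
    rwa [suppFn, suppFn_set_eq]
  obtain ⟨x, hx, hxe⟩ := h1
  exact ⟨x, hx, hxe⟩

lemma vectorSpan_sub_eq (A B : Set (Euc d)) (hA : A.Nonempty) (hB : B.Nonempty) :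
    vectorSpan ℝ (A - B) = vectorSpan ℝ A ⊔ vectorSpan ℝ B := by
  apply le_antisymm
  · rw [vectorSpan_def, Submodule.span_le]
    rintro z ⟨p, hp, q, hq, rfl⟩
    rw [Set.mem_sub] at hp hq
    obtain ⟨a, ha, b, hb, rfl⟩ := hp
    obtain ⟨a', ha', b', hb', rfl⟩ := hq
    show (a - b) -ᵥ (a' - b') ∈ (vectorSpan ℝ A ⊔ vectorSpan ℝ B : Submodule ℝ (Euc d))
    have h : (a - b) -ᵥ (a' - b') = (a -ᵥ a') + (b' -ᵥ b) := by
      simp only [vsub_eq_sub]; abel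
    rw [h]
    exact Submodule.add_mem_sup (vsub_mem_vectorSpan ℝ ha ha') (vsub_mem_vectorSpan ℝ hb' hb)
  · obtain ⟨a₀, ha₀⟩ := hA
    obtain ⟨b₀, hb₀⟩ := hB
    apply sup_le
    · rw [vectorSpan_def, Submodule.span_le]
      rintro z ⟨a, ha, a', ha', rfl⟩
      show a -ᵥ a' ∈ (vectorSpan ℝ (A - B) : Submodule ℝ (Euc d))
      have h : a -ᵥ a' = (a - b₀) -ᵥ (a' - b₀) := by
        simp only [vsub_eq_sub]; abel
      rw [h]
      exact vsub_mem_vectorSpan ℝ (Set.sub_mem_sub ha hb₀) (Set.sub_mem_sub ha' hb₀)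
    · rw [vectorSpan_def, Submodule.span_le]
      rintro z ⟨b, hb, b', hb', rfl⟩
      show b -ᵥ b' ∈ (vectorSpan ℝ (A - B) : Submodule ℝ (Euc d))
      have h : b -ᵥ b' = (a₀ - b') -ᵥ (a₀ - b) := by
        simp only [vsub_eq_sub]; abel
      rw [h]
      exact vsub_mem_vectorSpan ℝ (Set.sub_mem_sub ha₀ hb') (Set.sub_mem_sub ha₀ hb)

lemma vectorSpan_add_eq (A B : Set (Euc d)) (hA : A.Nonempty) (hB : B.Nonempty) :
    vectorSpan ℝ (A + B) = vectorSpan ℝ A ⊔ vectorSpan ℝ B := by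
  apply le_antisymm
  · rw [vectorSpan_def, Submodule.span_le]
    rintro z ⟨p, hp, q, hq, rfl⟩
    rw [Set.mem_add] at hp hq
    obtain ⟨a, ha, b, hb, rfl⟩ := hp
    obtain ⟨a', ha', b', hb', rfl⟩ := hq
    show (a + b) -ᵥ (a' + b') ∈ (vectorSpan ℝ A ⊔ vectorSpan ℝ B : Submodule ℝ (Euc d))
    have h : (a + b) -ᵥ (a' + b') = (a -ᵥ a') + (b -ᵥ b') := by
      simp only [vsub_eq_sub]; abel
    rw [h]
    exact Submodule.add_mem_sup (vsub_mem_vectorSpan ℝ ha ha') (vsub_mem_vectorSpan ℝ hb hb')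
  · obtain ⟨a₀, ha₀⟩ := hA
    obtain ⟨b₀, hb₀⟩ := hB
    apply sup_le
    · rw [vectorSpan_def, Submodule.span_le]
      rintro z ⟨a, ha, a', ha', rfl⟩
      show a -ᵥ a' ∈ (vectorSpan ℝ (A + B) : Submodule ℝ (Euc d))
      have h : a -ᵥ a' = (a + b₀) -ᵥ (a' + b₀) := by
        simp only [vsub_eq_sub]; abel
      rw [h]
      exact vsub_mem_vectorSpan ℝ (Set.add_mem_add ha hb₀) (Set.add_mem_add ha' hb₀)
    · rw [vectorSpan_def, Submodule.span_le]
      rintro z ⟨b, hb, b', hb', rfl⟩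
      show b -ᵥ b' ∈ (vectorSpan ℝ (A + B) : Submodule ℝ (Euc d))
      have h : b -ᵥ b' = (a₀ + b) -ᵥ (a₀ + b') := by
        simp only [vsub_eq_sub]; abel
      rw [h]
      exact vsub_mem_vectorSpan ℝ (Set.add_mem_add ha₀ hb) (Set.add_mem_add ha₀ hb')

lemma affDim_add_eq_affDim_sub (A B : Set (Euc d)) (hA : A.Nonempty) (hB : B.Nonempty) :
    affDim (A + B) = affDim (A - B) := by
  unfold affDim
  rw [direction_affineSpan, direction_affineSpan, vectorSpan_add_eq A B hA hB,
    vectorSpan_sub_eq A B hA hB]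

end Helpers

/-- Every facet of the difference polytope `P - P` of a polytope `P ⊆ ℝ^d` with
nonempty interior has the form `F₁ - F₂`, where `F₁` and `F₂` are strictly antipodal
faces of `P` whose Minkowski sum has affine dimension `d - 1`. -/
theorem facet_of_difference_polytope {d : ℕ} (P : Set (Euc d))
    (hP : IsPolytope P) (hint : (interior P).Nonempty)
    (G : Set (Euc d)) (hG : IsFacetOf (P - P) G) :
    ∃ F₁ F₂ : Set (Euc d), IsFaceOf P F₁ ∧ IsFaceOf P F₂ ∧
      StrictlyAntipodal P F₁ F₂ ∧ G = F₁ - F₂ ∧ affDim (F₁ + F₂) = d - 1 := by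
  -- P is compact and nonempty
  obtain ⟨V, hV⟩ := hP
  have hcomp : IsCompact P := by
    rw [hV]; exact V.finite_toSet.isCompact_convexHull ℝ
  have hne : P.Nonempty := hint.mono interior_subset
  obtain ⟨⟨u, hu, hGu⟩, hGdim⟩ := hG
  set F₁ := suppSet P u with hF₁
  set F₂ := suppSet P (-u) with hF₂
  obtain ⟨x₀, hx₀, hx₀e⟩ := exists_suppFn_eq hcomp hne u
  obtain ⟨y₀, hy₀, hy₀e⟩ := exists_suppFn_eq hcomp hne (-u)
  have hF₁ne : F₁.Nonempty := ⟨x₀, hx₀, hx₀e⟩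
  have hF₂ne : F₂.Nonempty := ⟨y₀, hy₀, hy₀e⟩
  -- support function of P - P
  have hub : ∀ r ∈ {r | ∃ z ∈ P - P, r = (inner ℝ u z : ℝ)}, r ≤ suppFn P u + suppFn P (-u) := by
    rintro r ⟨z, hz, rfl⟩
    rw [Set.mem_sub] at hz
    obtain ⟨a, ha, b, hb, rfl⟩ := hz
    have h1 := le_suppFn hcomp u ha
    have h2 := le_suppFn hcomp (-u) hb
    rw [inner_neg_left] at h2
    rw [inner_sub_right]
    linarith
  have key : suppFn (P - P) u = suppFn P u + suppFn P (-u) := by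
    apply le_antisymm
    · exact csSup_le ⟨inner ℝ u (x₀ - y₀), x₀ - y₀, Set.sub_mem_sub hx₀ hy₀, rfl⟩ hub
    · apply le_csSup ⟨suppFn P u + suppFn P (-u), hub⟩
      refine ⟨x₀ - y₀, Set.sub_mem_sub hx₀ hy₀, ?_⟩
      rw [inner_sub_right]
      rw [inner_neg_left] at hy₀e
      linarith
  -- the facet is F₁ - F₂
  have hGeq : G = F₁ - F₂ := by
    rw [hGu]
    ext z
    constructor
    · rintro ⟨hz, hze⟩
      rw [Set.mem_sub] at hz
      obtain ⟨a, ha, b, hb, rfl⟩ := hz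
      simp only [Set.mem_setOf_eq] at hze
      rw [inner_sub_right, key] at hze
      have h1 := le_suppFn hcomp u ha
      have h2 := le_suppFn hcomp (-u) hb
      rw [inner_neg_left] at h2
      refine Set.sub_mem_sub ⟨ha, ?_⟩ ⟨hb, ?_⟩
      · show (inner ℝ u a : ℝ) = suppFn P u
        linarith
      · show (inner ℝ (-u) b : ℝ) = suppFn P (-u)
        rw [inner_neg_left]; linarith
    · rintro hz
      rw [Set.mem_sub] at hz
      obtain ⟨a, ⟨ha, hae⟩, b, ⟨hb, hbe⟩, rfl⟩ := hz
      simp only [Set.mem_setOf_eq] at hae hbe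
      refine ⟨Set.sub_mem_sub ha hb, ?_⟩
      simp only [Set.mem_setOf_eq]
      rw [inner_sub_right, key]
      rw [inner_neg_left] at hbe
      linarith
  -- width is positive
  have hwidth : 0 < suppFn P u + suppFn P (-u) := by
    obtain ⟨c, hc⟩ := hint
    obtain ⟨ε, hε, hball⟩ := Metric.isOpen_iff.mp isOpen_interior c hc
    have huu : (inner ℝ u u : ℝ) = 1 := by
      rw [real_inner_self_eq_norm_sq, hu]; norm_num
    have hmem : ∀ t : ℝ, |t| < ε → c + t • u ∈ P := by
      intro t ht
      apply interior_subset
      apply hball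
      rw [Metric.mem_ball, dist_eq_norm]
      simp [norm_smul, hu, ht]
    have h1 : inner ℝ u c + ε / 2 ≤ suppFn P u := by
      have := le_suppFn hcomp u (hmem (ε / 2) (by rw [abs_of_pos (by linarith)]; linarith))
      rwa [inner_add_right, inner_smul_right, huu, mul_one] at this
    have h2 : -(inner ℝ u c : ℝ) + ε / 2 ≤ suppFn P (-u) := by
      have := le_suppFn hcomp (-u) (hmem (-(ε / 2)) (by rw [abs_neg, abs_of_pos (by linarith)]; linarith))
      rw [inner_neg_left, inner_add_right, inner_smul_right, huu, mul_one] at this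
      linarith
    linarith
  have hFne : F₁ ≠ F₂ := by
    intro h
    obtain ⟨x, hx, hxe⟩ := hF₁ne
    have hx2 : x ∈ F₂ := h ▸ (⟨hx, hxe⟩ : x ∈ F₁)
    obtain ⟨-, hxe2⟩ := hx2
    simp only [Set.mem_setOf_eq] at hxe hxe2
    rw [inner_neg_left] at hxe2
    linarith
  refine ⟨F₁, F₂, ⟨u, hu, rfl⟩, ⟨-u, by rw [norm_neg, hu], rfl⟩,
    ⟨hFne, u, hu, rfl, rfl⟩, hGeq, ?_⟩
  rw [affDim_add_eq_affDim_sub F₁ F₂ hF₁ne hF₂ne, ← hGeq, hGdim]
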